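/- The Hilbert–Schmidt distance defines a metric on the set of N×N unitary matrices modulo global phase: it is nonnegative, symmetric, satisfies the triangle inequality, and vanishes exactly on pairs that are equal up to a unit scalar. -/

import Mathlib

open scoped Matrix

variable {E : Type*} [NormedAddCommGroup E] [InnerProductSpace ℂ E]

local notation "⟪" x ", " y "⟫" => @inner ℂ _ _ x y

lemma norm_proj_sub (u v : E) (hu : ‖u‖ = 1) (hv : ‖v‖ = 1) :
    ‖u - ⟪v, u⟫ • v‖ = Real.sqrt (1 - ‖⟪u, v⟫‖ ^ 2) := by
  have h2 : ‖u - ⟪v, u⟫ • v‖ ^ 2 = 1 - ‖⟪u, v⟫‖ ^ 2 := by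
    rw [@norm_sub_sq ℂ]
    have h3 : ⟪u, ⟪v, u⟫ • v⟫ = ⟪v, u⟫ * ⟪u, v⟫ := by rw [inner_smul_right]
    have h4 : (⟪v, u⟫ : ℂ) * ⟪u, v⟫ = (‖⟪v, u⟫‖ : ℂ) ^ 2 := by
      rw [← inner_conj_symm u v, Complex.mul_conj']
    have h5 : ‖⟪v, u⟫‖ = ‖⟪u, v⟫‖ := by
      rw [← inner_conj_symm u v, RCLike.norm_conj]
    rw [h3, h4, norm_smul, hu, hv, h5, ← Complex.ofReal_pow, RCLike.re_to_complex,
      Complex.ofReal_re]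
    ring
  rw [← h2, Real.sqrt_sq (norm_nonneg _)]

lemma key_inner (u v w : E) (hu : ‖u‖ = 1) (hv : ‖v‖ = 1) (hw : ‖w‖ = 1) :
    ‖⟪u, w⟫ - ⟪u, v⟫ * ⟪v, w⟫‖ ≤
      Real.sqrt (1 - ‖⟪u, v⟫‖ ^ 2) * Real.sqrt (1 - ‖⟪v, w⟫‖ ^ 2) := by
  have hkey : ⟪u - ⟪v, u⟫ • v, w - ⟪v, w⟫ • v⟫ = ⟪u, w⟫ - ⟪u, v⟫ * ⟪v, w⟫ := by
    simp only [inner_sub_left, inner_sub_right, inner_smul_left, inner_smul_right]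
    rw [← inner_conj_symm v u]
    have : ⟪v, v⟫ = 1 := by
      rw [inner_self_eq_norm_sq_to_K, hv]; norm_num
    rw [this]
    ring
  have hw' : ‖w - ⟪v, w⟫ • v‖ = Real.sqrt (1 - ‖⟪w, v⟫‖ ^ 2) := norm_proj_sub w v hw hv
  have h5 : ‖⟪w, v⟫‖ = ‖⟪v, w⟫‖ := by rw [← inner_conj_symm v w, RCLike.norm_conj]
  calc ‖⟪u, w⟫ - ⟪u, v⟫ * ⟪v, w⟫‖ = ‖⟪u - ⟪v, u⟫ • v, w - ⟪v, w⟫ • v⟫‖ := by rw [hkey]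
    _ ≤ ‖u - ⟪v, u⟫ • v‖ * ‖w - ⟪v, w⟫ • v‖ := norm_inner_le_norm _ _
    _ = _ := by rw [norm_proj_sub u v hu hv, hw', h5]

lemma sine_tri_real (cx cy cz : ℝ) (hx0 : 0 ≤ cx) (hx1 : cx ≤ 1) (hy0 : 0 ≤ cy)
    (hy1 : cy ≤ 1) (hz0 : 0 ≤ cz)
    (h : cx * cy - Real.sqrt (1 - cx ^ 2) * Real.sqrt (1 - cy ^ 2) ≤ cz) :
    Real.sqrt (1 - cz ^ 2) ≤ Real.sqrt (1 - cx ^ 2) + Real.sqrt (1 - cy ^ 2) := by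
  set sx := Real.sqrt (1 - cx ^ 2) with hsx
  set sy := Real.sqrt (1 - cy ^ 2) with hsy
  have hsx0 : 0 ≤ sx := Real.sqrt_nonneg _
  have hsy0 : 0 ≤ sy := Real.sqrt_nonneg _
  have hsx2 : sx ^ 2 = 1 - cx ^ 2 := Real.sq_sqrt (by nlinarith)
  have hsy2 : sy ^ 2 = 1 - cy ^ 2 := Real.sq_sqrt (by nlinarith)
  by_cases h1 : 1 ≤ sx + sy
  · calc Real.sqrt (1 - cz ^ 2) ≤ Real.sqrt 1 := Real.sqrt_le_sqrt (by nlinarith)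
      _ = 1 := Real.sqrt_one
      _ ≤ sx + sy := h1
  · push_neg at h1
    have hcxsy : sy ≤ cx := by
      have h2 : sy ^ 2 ≤ cx ^ 2 := by nlinarith [mul_nonneg hsx0 hsy0]
      rw [← Real.sqrt_sq hsy0, ← Real.sqrt_sq hx0]
      exact Real.sqrt_le_sqrt h2
    have hcysx : sx ≤ cy := by
      have h2 : sx ^ 2 ≤ cy ^ 2 := by nlinarith [mul_nonneg hsx0 hsy0]
      rw [← Real.sqrt_sq hsx0, ← Real.sqrt_sq hy0]
      exact Real.sqrt_le_sqrt h2
    have hpos : 0 ≤ cx * cy - sx * sy := by nlinarith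
    have hz2 : (cx * cy - sx * sy) ^ 2 ≤ cz ^ 2 := by nlinarith
    have hid : (sx * cy + cx * sy) ^ 2 + (cx * cy - sx * sy) ^ 2
        = (sx ^ 2 + cx ^ 2) * (sy ^ 2 + cy ^ 2) := by ring
    have hid2 : 1 - (cx * cy - sx * sy) ^ 2 = (sx * cy + cx * sy) ^ 2 := by
      rw [hsx2, hsy2] at hid; nlinarith [hid]
    have t1 : sx * cy ≤ sx := by nlinarith
    have t2 : cx * sy ≤ sy := by nlinarith
    have t0 : 0 ≤ sx * cy + cx * sy := by positivity
    have hle : (sx * cy + cx * sy) ^ 2 ≤ (sx + sy) ^ 2 :=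
      pow_le_pow_left₀ t0 (by linarith) 2
    calc Real.sqrt (1 - cz ^ 2) ≤ Real.sqrt ((sx + sy) ^ 2) := by
          apply Real.sqrt_le_sqrt
          linarith
      _ = sx + sy := Real.sqrt_sq (by positivity)

lemma sine_triangle (u v w : E) (hu : ‖u‖ = 1) (hv : ‖v‖ = 1) (hw : ‖w‖ = 1) :
    Real.sqrt (1 - ‖⟪u, w⟫‖ ^ 2) ≤
      Real.sqrt (1 - ‖⟪u, v⟫‖ ^ 2) + Real.sqrt (1 - ‖⟪v, w⟫‖ ^ 2) := by
  have hb : ∀ x y : E, ‖x‖ = 1 → ‖y‖ = 1 → ‖⟪x, y⟫‖ ≤ 1 := by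
    intro x y hx hy
    simpa [hx, hy] using norm_inner_le_norm (𝕜 := ℂ) x y
  apply sine_tri_real _ _ _ (norm_nonneg _) (hb u v hu hv) (norm_nonneg _)
    (hb v w hv hw) (norm_nonneg _)
  have h1 := key_inner u v w hu hv hw
  have h2 : ‖⟪u, v⟫ * ⟪v, w⟫‖ - ‖⟪u, w⟫‖ ≤ ‖⟪u, w⟫ - ⟪u, v⟫ * ⟪v, w⟫‖ := by
    rw [norm_sub_rev]
    exact norm_sub_norm_le _ _
  rw [norm_mul] at h2
  linarith

open scoped Matrix

noncomputable def toE {N : ℕ} (U : Matrix (Fin N) (Fin N) ℂ) :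
    EuclideanSpace ℂ (Fin N × Fin N) :=
  WithLp.toLp 2 (fun p : Fin N × Fin N => (((N : ℝ).sqrt : ℂ))⁻¹ * U p.1 p.2)

lemma trace_eq {N : ℕ} (U V : Matrix (Fin N) (Fin N) ℂ) :
    (Uᴴ * V).trace = ∑ p : Fin N × Fin N, (starRingEnd ℂ) (U p.1 p.2) * V p.1 p.2 := by
  rw [Fintype.sum_prod_type, Matrix.trace]
  simp only [Matrix.diag_apply, Matrix.mul_apply, Matrix.conjTranspose_apply,
    Complex.star_def]
  exact Finset.sum_comm

lemma inner_toE {N : ℕ} (hN : 1 ≤ N) (U V : Matrix (Fin N) (Fin N) ℂ) :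
    ⟪toE U, toE V⟫ = (Uᴴ * V).trace / N := by
  have hc : (starRingEnd ℂ) ((((N : ℝ).sqrt : ℂ))⁻¹) * (((N : ℝ).sqrt : ℂ))⁻¹
      = ((N : ℂ))⁻¹ := by
    rw [map_inv₀, Complex.conj_ofReal, ← mul_inv, ← Complex.ofReal_mul,
      Real.mul_self_sqrt (by positivity)]
    norm_num
  rw [trace_eq, PiLp.inner_apply]
  simp only [toE, PiLp.toLp_apply, RCLike.inner_apply, map_mul]
  rw [div_eq_mul_inv, Finset.sum_mul]
  apply Finset.sum_congr rfl
  intro p _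
  rw [← hc]
  ring

lemma norm_toE {N : ℕ} (hN : 1 ≤ N) (U : Matrix (Fin N) (Fin N) ℂ)
    (hU : U ∈ Matrix.unitaryGroup (Fin N) ℂ) : ‖toE U‖ = 1 := by
  have h1 : Uᴴ * U = 1 := by
    have := hU.1
    simpa [Matrix.star_eq_conjTranspose] using this
  have h2 : ⟪toE U, toE U⟫ = 1 := by
    rw [inner_toE hN, h1, Matrix.trace_one]
    simp
    exact_mod_cast Nat.one_le_iff_ne_zero.mp hN
  have h4 : ‖toE U‖ ^ 2 = 1 := by
    have h3 := inner_self_eq_norm_sq (𝕜 := ℂ) (toE U)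
    rw [h2] at h3
    simpa using h3.symm
  nlinarith [norm_nonneg (toE U)]

noncomputable def hsDist {N : ℕ} (U V : Matrix (Fin N) (Fin N) ℂ) : ℝ :=
  Real.sqrt (1 - ‖(Uᴴ * V).trace‖ ^ 2 / (N : ℝ) ^ 2)

lemma hsDist_eq' {N : ℕ} (hN : 1 ≤ N) (U V : Matrix (Fin N) (Fin N) ℂ) :
    hsDist U V = Real.sqrt (1 - ‖⟪toE U, toE V⟫‖ ^ 2) := by
  rw [hsDist, inner_toE hN]
  congr 2
  rw [norm_div, div_pow, Complex.norm_natCast]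

lemma trace_symm {N : ℕ} (U V : Matrix (Fin N) (Fin N) ℂ) :
    ‖(Vᴴ * U).trace‖ = ‖(Uᴴ * V).trace‖ := by
  have h : (Vᴴ * U) = (Uᴴ * V)ᴴ := by
    rw [Matrix.conjTranspose_mul, Matrix.conjTranspose_conjTranspose]
  rw [h, Matrix.trace_conjTranspose, Complex.star_def, RCLike.norm_conj]

theorem hsDist_metric_mod_phase (N : ℕ) (hN : 1 ≤ N) :
    (∀ U V : Matrix (Fin N) (Fin N) ℂ,
        U ∈ Matrix.unitaryGroup (Fin N) ℂ → V ∈ Matrix.unitaryGroup (Fin N) ℂ →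
        0 ≤ hsDist U V) ∧
    (∀ U V : Matrix (Fin N) (Fin N) ℂ,
        U ∈ Matrix.unitaryGroup (Fin N) ℂ → V ∈ Matrix.unitaryGroup (Fin N) ℂ →
        hsDist U V = hsDist V U) ∧
    (∀ U V W : Matrix (Fin N) (Fin N) ℂ,
        U ∈ Matrix.unitaryGroup (Fin N) ℂ → V ∈ Matrix.unitaryGroup (Fin N) ℂ →
        W ∈ Matrix.unitaryGroup (Fin N) ℂ →
        hsDist U W ≤ hsDist U V + hsDist V W) ∧
    (∀ U V : Matrix (Fin N) (Fin N) ℂ,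
        U ∈ Matrix.unitaryGroup (Fin N) ℂ → V ∈ Matrix.unitaryGroup (Fin N) ℂ →
        (hsDist U V = 0 ↔ ∃ c : ℂ, ‖c‖ = 1 ∧ V = c • U)) := by
  have hNR : (0 : ℝ) < N := by exact_mod_cast hN
  refine ⟨fun U V _ _ => Real.sqrt_nonneg _, fun U V _ _ => by
    rw [hsDist, hsDist, trace_symm], fun U V W hU hV hW => ?_, fun U V hU hV => ?_⟩
  · rw [hsDist_eq' hN, hsDist_eq' hN, hsDist_eq' hN]
    exact sine_triangle _ _ _ (norm_toE hN U hU) (norm_toE hN V hV) (norm_toE hN W hW)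
  · constructor
    · intro h
      rw [hsDist_eq' hN] at h
      have hle : ‖⟪toE U, toE V⟫‖ ≤ 1 := by
        simpa [norm_toE hN U hU, norm_toE hN V hV] using
          norm_inner_le_norm (𝕜 := ℂ) (toE U) (toE V)
      have hge : 1 - ‖⟪toE U, toE V⟫‖ ^ 2 ≤ 0 := Real.sqrt_eq_zero'.mp h
      have heq : ‖⟪toE U, toE V⟫‖ = 1 := by nlinarith [norm_nonneg (⟪toE U, toE V⟫ : ℂ)]
      have hU0 : toE U ≠ 0 := by
        rw [← norm_ne_zero_iff, norm_toE hN U hU]; norm_num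
      have hV0 : toE V ≠ 0 := by
        rw [← norm_ne_zero_iff, norm_toE hN V hV]; norm_num
      obtain ⟨r, hr0, hr⟩ := (norm_inner_eq_norm_iff hU0 hV0).mp
        (by rw [heq, norm_toE hN U hU, norm_toE hN V hV]; norm_num)
      have hr1 : ‖r‖ = 1 := by
        have := congrArg norm hr
        rw [norm_toE hN V hV, norm_smul, norm_toE hN U hU, mul_one] at this
        exact this.symm
      refine ⟨r, hr1, ?_⟩
      ext i j
      have := congrFun (congrArg WithLp.ofLp hr) (i, j)
      rw [PiLp.smul_apply] at this
      have hs : (0:ℝ) < (N:ℝ).sqrt := Real.sqrt_pos.mpr hNR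
      have hc : (((N : ℝ).sqrt : ℂ))⁻¹ ≠ 0 := inv_ne_zero (by exact_mod_cast hs.ne')
      simp only [toE, PiLp.toLp_apply, smul_eq_mul] at this
      rw [Matrix.smul_apply, smul_eq_mul]
      exact mul_left_cancel₀ hc (this.trans (by ring))
    · rintro ⟨c, hc, rfl⟩
      have h1 : Uᴴ * U = 1 := by
        have := hU.1
        simpa [Matrix.star_eq_conjTranspose] using this
      rw [hsDist, Matrix.mul_smul, Matrix.trace_smul, h1, Matrix.trace_one]
      simp only [smul_eq_mul, norm_mul, hc, one_mul, Fintype.card_fin,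
        Complex.norm_natCast]
      rw [div_self (pow_ne_zero _ hNR.ne'), sub_self, Real.sqrt_zero]
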